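/- Let l ≥ 3 be a natural number and let x, y ∈ [1/l, 1] be real numbers. Then l(l-1)(x + y - 2xy) ≥ 2(l - 2 - l·x·y + x + y). -/

import Mathlib

theorem stmt_1 (l : ℕ) (hl : 3 ≤ l) (x y : ℝ)
    (hx : x ∈ Set.Icc (1 / (l : ℝ)) 1) (hy : y ∈ Set.Icc (1 / (l : ℝ)) 1) :
    (l : ℝ) * (l - 1) * (x + y - 2 * x * y) ≥
      2 * ((l : ℝ) - 2 - l * x * y + x + y) := by
  obtain ⟨hx1, hx2⟩ := hx
  obtain ⟨hy1, hy2⟩ := hy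
  have hl3 : (3 : ℝ) ≤ (l : ℝ) := by exact_mod_cast hl
  have hlpos : (0 : ℝ) < l := by linarith
  have hLx : (l : ℝ) * x ≥ 1 := by
    rw [ge_iff_le, ← div_le_iff₀' hlpos] at *
    simpa [one_div] using hx1
  have hLy : (l : ℝ) * y ≥ 1 := by
    rw [ge_iff_le, ← div_le_iff₀' hlpos] at *
    simpa [one_div] using hy1
  nlinarith [mul_nonneg (sub_nonneg.2 hx2) (sub_nonneg.2 hy2),
    mul_nonneg (sub_nonneg.2 (le_of_lt hlpos)) (sub_nonneg.2 hx2),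
    mul_nonneg (mul_nonneg (sub_nonneg.2 (le_of_lt hlpos)) (sub_nonneg.2 hx2)) (sub_nonneg.2 hy2),
    mul_nonneg (sub_nonneg.2 hLx) (sub_nonneg.2 hy2),
    mul_nonneg (sub_nonneg.2 hLy) (sub_nonneg.2 hx2),
    mul_nonneg (mul_nonneg (sub_nonneg.2 hLx) (sub_nonneg.2 hy2)) (sub_nonneg.2 hl3),
    sq_nonneg (x - y), sq_nonneg ((l:ℝ)*x - (l:ℝ)*y)]
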